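/- Let W₁, …, W_N be mutually independent symmetric random variables, independent of random variables X₁, …, X_N (which may be mutually dependent). Then the products W₁X₁, …, W_N X_N satisfy the positive dependence condition with constant C = 1/2^{N−1}: for all z ∈ ℝ, P(W₁X₁ ≥ 0, …, W_{N−1}X_{N−1} ≥ 0 | W_N X_N ≥ z) ≥ 1/2^{N−1}, and analogously for the left tails. -/

import Mathlib

open MeasureTheory Filter Real Finset

noncomputable section

/-- A positive function `l` on `(0,∞)` is slowly varying if `l(tx)/l(x) → 1` as `x → ∞`
for every `t > 0`. -/
def SlowlyVarying (l : ℝ → ℝ) : Prop :=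
  (∀ x : ℝ, 0 < x → 0 < l x) ∧
    ∀ t : ℝ, 0 < t → Tendsto (fun x : ℝ => l (t * x) / l x) atTop (nhds 1)

/-- A positive function `r` is regularly varying with index `ρ` if `r(tx)/r(x) → t^ρ`. -/
def RegularlyVarying (r : ℝ → ℝ) (ρ : ℝ) : Prop :=
  (∀ᶠ x in atTop, 0 < r x) ∧
    ∀ t : ℝ, 0 < t → Tendsto (fun x : ℝ => r (t * x) / r x) atTop (nhds (t ^ ρ))

/-- Survival function `P(X ≥ x)`. -/
def survival {Ω : Type*} [MeasurableSpace Ω] (μ : Measure Ω) (X : Ω → ℝ) (x : ℝ) : ℝ :=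
  (μ {ω | x ≤ X ω}).toReal

/-- `X` is generalized Weibull-tail on `ℝ₊` with tail parameter `β`:
its survival function is sandwiched between Weibull-tail functions with parameter `β`
for `x` large enough. -/
def GWTpos {Ω : Type*} [MeasurableSpace Ω] (μ : Measure Ω) (X : Ω → ℝ) (β : ℝ) : Prop :=
  ∃ l₁ l₂ : ℝ → ℝ, SlowlyVarying l₁ ∧ SlowlyVarying l₂ ∧
    ∀ᶠ x in atTop, Real.exp (-(x ^ β * l₁ x)) ≤ survival μ X x ∧
      survival μ X x ≤ Real.exp (-(x ^ β * l₂ x))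

/-- `X` is generalized Weibull-tail on `ℝ` with tail parameter `β`: both its right tail
`P(X ≥ x)` and its left tail `P(X ≤ -x) = P(-X ≥ x)` are sandwiched between
Weibull-tail functions with parameter `β`. -/
def GWTreal {Ω : Type*} [MeasurableSpace Ω] (μ : Measure Ω) (X : Ω → ℝ) (β : ℝ) : Prop :=
  GWTpos μ X β ∧ GWTpos μ (fun ω => -X ω) β

/-- `X` is Weibull-tail on `ℝ₊` with tail parameter `β`: `P(X ≥ x) = exp (-x^β l(x))`
for `x > 0`, with `l` slowly varying. -/
def WTpos {Ω : Type*} [MeasurableSpace Ω] (μ : Measure Ω) (X : Ω → ℝ) (β : ℝ) : Prop :=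
  ∃ l : ℝ → ℝ, SlowlyVarying l ∧ ∀ x : ℝ, 0 < x →
    survival μ X x = Real.exp (-(x ^ β * l x))

/-- `X` is Weibull-tail on `ℝ` with tail parameter `β`: both tails are Weibull-tail. -/
def WTreal {Ω : Type*} [MeasurableSpace Ω] (μ : Measure Ω) (X : Ω → ℝ) (β : ℝ) : Prop :=
  WTpos μ X β ∧ WTpos μ (fun ω => -X ω) β

/-- `X` is symmetric: `X` and `-X` have the same distribution. -/
def SymmetricRV {Ω : Type*} [MeasurableSpace Ω] (μ : Measure Ω) (X : Ω → ℝ) : Prop :=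
  Measure.map X μ = Measure.map (fun ω => -X ω) μ


open ProbabilityTheory in
theorem pd_key {Ω : Type*} [MeasurableSpace Ω]
    (μ : Measure Ω) [IsProbabilityMeasure μ] (N : ℕ)
    (W X : Fin (N + 1) → Ω → ℝ)
    (hmW : ∀ i, Measurable (W i)) (hmX : ∀ i, Measurable (X i))
    (hWindep : ProbabilityTheory.iIndepFun (m := fun _ => Real.measurableSpace) W μ)
    (hWX : ProbabilityTheory.IndepFun (fun ω (i : Fin (N + 1)) => W i ω)
      (fun ω (i : Fin (N + 1)) => X i ω) μ)
    (hWsym : ∀ i, SymmetricRV μ (W i))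
    (S T : Set ℝ) (hS : MeasurableSet S) (hT : MeasurableSet T)
    (hScov : ∀ a : ℝ, a ∈ S ∨ -a ∈ S) :
    μ {ω | W (Fin.last N) ω * X (Fin.last N) ω ∈ T} ≤
      2 ^ N * μ {ω | (∀ i : Fin N, W i.castSucc ω * X i.castSucc ω ∈ S) ∧
        W (Fin.last N) ω * X (Fin.last N) ω ∈ T} := by
  classical
  set Wv : Ω → Fin (N + 1) → ℝ := fun ω i => W i ω with hWvdef
  set Xv : Ω → Fin (N + 1) → ℝ := fun ω i => X i ω with hXvdef
  have hmWv : Measurable Wv := measurable_pi_iff.2 hmW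
  have hmXv : Measurable Xv := measurable_pi_iff.2 hmX
  -- sign functions
  set sg : (Fin N → Bool) → Fin (N + 1) → ℝ := fun ε j =>
    Fin.lastCases 1 (fun i => if ε i then 1 else -1) j with hsgdef
  have hsg_last : ∀ ε, sg ε (Fin.last N) = 1 := fun ε => by
    simp [hsgdef]
  have hsg_cast : ∀ ε i, sg ε i.castSucc = if ε i then 1 else -1 := fun ε i => by
    simp [hsgdef]
  -- measurability of sign-flip maps
  have hmflip : ∀ ε : Fin N → Bool,
      Measurable (fun w : Fin (N + 1) → ℝ => fun i => sg ε i * w i) :=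
    fun ε => measurable_pi_iff.2 fun i => (measurable_pi_apply i).const_mul _
  -- each flipped W has same law
  have hmarg : ∀ (ε : Fin N → Bool) i,
      Measure.map (fun ω => sg ε i * W i ω) μ = Measure.map (W i) μ := by
    intro ε i
    induction i using Fin.lastCases with
    | last => rw [hsg_last]; simp
    | cast i =>
      rw [hsg_cast]
      by_cases h : ε i
      · simp [h]
      · simp only [h, if_false]
        have := (hWsym i.castSucc).symm
        simpa [neg_mul, one_mul] using this
  -- law of any flipped W-vector is the product law
  have hpi : ∀ (ε : Fin N → Bool),
      Measure.map (fun ω i => sg ε i * W i ω) μ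
        = Measure.pi (fun i => Measure.map (W i) μ) := by
    intro ε
    have hWε : ProbabilityTheory.iIndepFun (m := fun _ => Real.measurableSpace)
        (fun i ω => sg ε i * W i ω) μ :=
      hWindep.comp (fun i (y : ℝ) => sg ε i * y) (fun i => measurable_id.const_mul _)
    have hmε : ∀ i, Measurable (fun ω => sg ε i * W i ω) := fun i => (hmW i).const_mul _
    haveI : ∀ i, IsProbabilityMeasure (Measure.map (W i) μ) :=
      fun i => Measure.isProbabilityMeasure_map (hmW i).aemeasurable
    refine (Measure.pi_eq (μ := fun i => Measure.map (W i) μ) fun s hs => ?_).symm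
    rw [Measure.map_apply (measurable_pi_iff.2 hmε) (MeasurableSet.univ_pi hs)]
    have hpre : (fun ω i => sg ε i * W i ω) ⁻¹' Set.pi Set.univ s
        = ⋂ i ∈ (Finset.univ : Finset (Fin (N + 1))), (fun ω => sg ε i * W i ω) ⁻¹' s i := by
      ext ω; simp [Set.mem_pi]
    rw [hpre, hWε.measure_inter_preimage_eq_mul Finset.univ (fun i _ => hs i)]
    refine Finset.prod_congr rfl fun i _ => ?_
    rw [← Measure.map_apply (hmε i) (hs i), hmarg ε i]
  -- joint law of (flipped W vector, X vector) does not depend on ε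
  have hjoint : ∀ ε : Fin N → Bool,
      Measure.map (fun ω => ((fun i => sg ε i * Wv ω i), Xv ω)) μ
        = Measure.map (fun ω => (Wv ω, Xv ω)) μ := by
    intro ε
    have hWXε : ProbabilityTheory.IndepFun (fun ω => fun i => sg ε i * Wv ω i) Xv μ :=
      hWX.comp (hmflip ε) measurable_id
    have hm' : Measurable (fun ω => fun i => sg ε i * Wv ω i) := (hmflip ε).comp hmWv
    rw [(ProbabilityTheory.indepFun_iff_map_prod_eq_prod_map_map
        (f := fun ω => fun i => sg ε i * Wv ω i) (g := Xv)
        hm'.aemeasurable hmXv.aemeasurable).1 hWXε,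
      (ProbabilityTheory.indepFun_iff_map_prod_eq_prod_map_map
        hmWv.aemeasurable hmXv.aemeasurable).1 hWX]
    congr 1
    have h1 : (fun ω => fun i => sg ε i * Wv ω i) = (fun ω i => sg ε i * W i ω) := rfl
    rw [h1, hpi ε]
    have hsg_one : ∀ j, sg (fun _ => true) j = 1 := by
      intro j
      induction j using Fin.lastCases with
      | last => exact hsg_last _
      | cast i => rw [hsg_cast]; simp
    have hone : Wv = fun ω i => sg (fun _ => true) i * W i ω := by
      funext ω i
      rw [hsg_one, one_mul]
    rw [hone, hpi]
  -- fixed measurable target set in the product space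
  set A : Set ((Fin (N + 1) → ℝ) × (Fin (N + 1) → ℝ)) :=
    {p | (∀ i : Fin N, p.1 i.castSucc * p.2 i.castSucc ∈ S) ∧
      p.1 (Fin.last N) * p.2 (Fin.last N) ∈ T} with hAdef
  have hmul : ∀ j : Fin (N + 1),
      Measurable (fun p : (Fin (N + 1) → ℝ) × (Fin (N + 1) → ℝ) => p.1 j * p.2 j) :=
    fun j => ((measurable_pi_apply j).comp measurable_fst).mul
      ((measurable_pi_apply j).comp measurable_snd)
  have hmA : MeasurableSet A := by
    refine MeasurableSet.inter ?_ (hmul (Fin.last N) hT)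
    have : {p : (Fin (N + 1) → ℝ) × (Fin (N + 1) → ℝ) |
        ∀ i : Fin N, p.1 i.castSucc * p.2 i.castSucc ∈ S}
        = ⋂ i : Fin N, (fun p : (Fin (N + 1) → ℝ) × (Fin (N + 1) → ℝ) =>
            p.1 i.castSucc * p.2 i.castSucc) ⁻¹' S := by
      ext p; simp [Set.mem_iInter]
    rw [show (fun p : (Fin (N + 1) → ℝ) × (Fin (N + 1) → ℝ) =>
        ∀ i : Fin N, p.1 i.castSucc * p.2 i.castSucc ∈ S) = _ from this]
    exact MeasurableSet.iInter fun (i : Fin N) => hmul i.castSucc hS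
  -- each flipped event has the same measure as the target event
  set E : Set Ω := {ω | (∀ i : Fin N, W i.castSucc ω * X i.castSucc ω ∈ S) ∧
      W (Fin.last N) ω * X (Fin.last N) ω ∈ T} with hEdef
  have hkey : ∀ ε : Fin N → Bool,
      μ ((fun ω => ((fun i => sg ε i * Wv ω i), Xv ω)) ⁻¹' A) = μ E := by
    intro ε
    have hmε : Measurable (fun ω => ((fun i => sg ε i * Wv ω i), Xv ω)) :=
      ((hmflip ε).comp hmWv).prodMk hmXv
    rw [← Measure.map_apply hmε hmA, hjoint ε,
      Measure.map_apply (hmWv.prodMk hmXv) hmA]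
    rfl
  -- covering
  have hcov : {ω | W (Fin.last N) ω * X (Fin.last N) ω ∈ T} ⊆
      ⋃ ε ∈ (Finset.univ : Finset (Fin N → Bool)),
        (fun ω => ((fun i => sg ε i * Wv ω i), Xv ω)) ⁻¹' A := by
    intro ω hω
    refine Set.mem_biUnion (Finset.mem_univ
      (fun i => decide (W i.castSucc ω * X i.castSucc ω ∈ S))) ?_
    refine ⟨fun i => ?_, ?_⟩
    · show sg _ i.castSucc * Wv ω i.castSucc * Xv ω i.castSucc ∈ S
      rw [hsg_cast]
      by_cases h : W i.castSucc ω * X i.castSucc ω ∈ S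
      · rw [if_pos (decide_eq_true h), one_mul]
        exact h
      · rw [if_neg (fun hc => h (of_decide_eq_true hc))]
        have := (hScov (W i.castSucc ω * X i.castSucc ω)).resolve_left h
        simpa [neg_mul, mul_assoc] using this
    · show sg _ (Fin.last N) * Wv ω (Fin.last N) * Xv ω (Fin.last N) ∈ T
      rw [hsg_last, one_mul]
      exact hω
  -- union bound
  calc μ {ω | W (Fin.last N) ω * X (Fin.last N) ω ∈ T}
      ≤ μ (⋃ ε ∈ (Finset.univ : Finset (Fin N → Bool)),
          (fun ω => ((fun i => sg ε i * Wv ω i), Xv ω)) ⁻¹' A) := measure_mono hcov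
    _ ≤ ∑ ε ∈ (Finset.univ : Finset (Fin N → Bool)),
          μ ((fun ω => ((fun i => sg ε i * Wv ω i), Xv ω)) ⁻¹' A) :=
        measure_biUnion_finset_le _ _
    _ = ∑ _ε ∈ (Finset.univ : Finset (Fin N → Bool)), μ E :=
        Finset.sum_congr rfl fun ε _ => hkey ε
    _ = 2 ^ N * μ E := by
        rw [Finset.sum_const, Finset.card_univ]
        simp [nsmul_eq_mul]

/-- Products of mutually independent symmetric weights `W_i` with (possibly dependent)
variables `X_i`, the vector of weights being independent of the vector of the `X_i`,
satisfy the positive dependence condition with constant `C = 1/2^{N-1}`. -/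
theorem pd_of_symmetric_weights {Ω : Type*} [MeasurableSpace Ω]
    (μ : Measure Ω) [IsProbabilityMeasure μ] (N : ℕ)
    (W X : Fin (N + 1) → Ω → ℝ)
    (hmW : ∀ i, Measurable (W i)) (hmX : ∀ i, Measurable (X i))
    (hWindep : ProbabilityTheory.iIndepFun (m := fun _ => Real.measurableSpace) W μ)
    (hWX : ProbabilityTheory.IndepFun (fun ω (i : Fin (N + 1)) => W i ω)
      (fun ω (i : Fin (N + 1)) => X i ω) μ)
    (hWsym : ∀ i, SymmetricRV μ (W i)) :
    ∀ z : ℝ,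
      (1 / 2 ^ N : ℝ) * (μ {ω | z ≤ W (Fin.last N) ω * X (Fin.last N) ω}).toReal ≤
        (μ {ω | (∀ i : Fin N, 0 ≤ W i.castSucc ω * X i.castSucc ω) ∧
            z ≤ W (Fin.last N) ω * X (Fin.last N) ω}).toReal ∧
      (1 / 2 ^ N : ℝ) * (μ {ω | W (Fin.last N) ω * X (Fin.last N) ω ≤ z}).toReal ≤
        (μ {ω | (∀ i : Fin N, W i.castSucc ω * X i.castSucc ω ≤ 0) ∧
            W (Fin.last N) ω * X (Fin.last N) ω ≤ z}).toReal := by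
  intro z
  have h2 : ((2 : ENNReal) ^ N) ≠ ⊤ := ENNReal.pow_ne_top (by norm_num)
  have hconv : ∀ (A B : Set Ω), μ A ≤ 2 ^ N * μ B →
      (1 / 2 ^ N : ℝ) * (μ A).toReal ≤ (μ B).toReal := by
    intro A B h
    have hfin : (2 : ENNReal) ^ N * μ B ≠ ⊤ := ENNReal.mul_ne_top h2 (measure_ne_top μ B)
    have h' := ENNReal.toReal_mono hfin h
    rw [ENNReal.toReal_mul] at h'
    have h2' : ((2 : ENNReal) ^ N).toReal = (2 : ℝ) ^ N := by
      simp [ENNReal.toReal_pow]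
    rw [h2'] at h'
    rw [one_div]
    rw [inv_mul_le_iff₀ (by positivity : (0 : ℝ) < 2 ^ N)]
    exact h'
  constructor
  · refine hconv _ _ ?_
    have := pd_key μ N W X hmW hmX hWindep hWX hWsym (Set.Ici 0) (Set.Ici z)
      measurableSet_Ici measurableSet_Ici (fun a => by
        rcases le_total 0 a with h | h
        · exact Or.inl h
        · exact Or.inr (by simpa using h))
    simpa [Set.mem_Ici] using this
  · refine hconv _ _ ?_
    have := pd_key μ N W X hmW hmX hWindep hWX hWsym (Set.Iic 0) (Set.Iic z)
      measurableSet_Iic measurableSet_Iic (fun a => by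
        rcases le_total a 0 with h | h
        · exact Or.inl h
        · exact Or.inr (by simpa using h))
    simpa [Set.mem_Iic] using this
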